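/- If Q is an m-point Gauss quadrature rule (weights w^i > 0, points x^i) with respect to a probability measure μ on ℝ, i.e. ∑ w^i p(x^i) = ∫ p dμ for all polynomials p of degree at most 2m−1, then for any α > 0 we have ∑_{i=1}^m w^i exp(α (x^i)²) ≤ ∫ exp(α x²) dμ(x). -/

import Mathlib

open MeasureTheory Real Finset

lemma integrable_exp_neg_pow (n : ℕ) :
    IntegrableOn (fun u : ℝ => Real.exp (-u) * u ^ n) (Set.Ioi 0) := by
  have h := Real.GammaIntegral_convergent (s := (n + 1 : ℝ)) (by positivity)
  refine h.congr_fun ?_ measurableSet_Ioi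
  intro u hu
  simp only []
  rw [show ((n:ℝ) + 1 - 1) = (n : ℝ) by ring, Real.rpow_natCast]

lemma integral_exp_neg_pow (n : ℕ) :
    ∫ u in Set.Ioi (0:ℝ), Real.exp (-u) * u ^ n = (Nat.factorial n : ℝ) := by
  have h := Real.Gamma_eq_integral (s := (n + 1 : ℝ)) (by positivity)
  rw [show ((n:ℝ)+1) = ((n:ℕ):ℝ)+1 by norm_num] at h
  rw [Real.Gamma_nat_eq_factorial] at h
  rw [h]
  refine setIntegral_congr_fun measurableSet_Ioi fun u hu => ?_
  rw [show ((n:ℝ) + 1 - 1) = (n : ℝ) by ring, Real.rpow_natCast]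

/-- complete homogeneous symmetric function of the list entries -/
noncomputable def hsym : List ℝ → ℕ → ℝ
  | [], d => if d = 0 then 1 else 0
  | a :: L, d => ∑ i ∈ Finset.range (d+1), a^i * hsym L (d - i)

lemma hsym_nil (d : ℕ) : hsym [] d = if d = 0 then 1 else 0 := rfl

lemma hsym_cons (a : ℝ) (L : List ℝ) (d : ℕ) :
    hsym (a :: L) d = ∑ i ∈ Finset.range (d+1), a^i * hsym L (d - i) := rfl

noncomputable def gfun (n : ℕ) (L : List ℝ) (t : ℝ) : ℝ :=
  ∑ j ∈ Finset.range (n+1), hsym L (n-j) * t^j / (Nat.factorial j)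

lemma triangle_reindex (n : ℕ) (F : ℕ → ℕ → ℝ) :
    ∑ j ∈ range (n+1), ∑ i ∈ range (j+1), F i (j - i)
    = ∑ l ∈ range (n+1), ∑ i ∈ range (n+1-l), F i l := by
  induction n with
  | zero => simp
  | succ n ih =>
    rw [sum_range_succ, ih]
    have hR : ∑ l ∈ range (n+1+1), ∑ i ∈ range (n+1+1-l), F i l
        = (∑ l ∈ range (n+1), ∑ i ∈ range (n+1-l), F i l)
          + ((∑ l ∈ range (n+1), F (n+1-l) l) + F 0 (n+1)) := by
      rw [sum_range_succ]
      have h1 : ∀ l ∈ range (n+1), ∑ i ∈ range (n+1+1-l), F i l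
          = ∑ i ∈ range (n+1-l), F i l + F (n+1-l) l := by
        intro l hl
        rw [mem_range] at hl
        rw [show n+1+1-l = (n+1-l)+1 by omega, sum_range_succ]
      rw [sum_congr rfl h1, sum_add_distrib, show n+1+1-(n+1) = 1 by omega, sum_range_one]
      ring
    rw [hR]
    congr 1
    -- ⊢ ∑ i ∈ range (n+1+1), F i (n+1-i) = ∑ l ∈ range (n+1), F (n+1-l) l + F 0 (n+1)
    have hrefl : ∑ j ∈ range (n+2), F (n+1-j) j = ∑ j ∈ range (n+2), F j (n+1-j) := by
      rw [← Finset.sum_range_reflect (fun x => F x (n+1-x)) (n+2)]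
      refine sum_congr rfl fun j hj => ?_
      rw [mem_range] at hj
      congr 1 <;> omega
    calc ∑ i ∈ range (n+1+1), F i (n+1-i)
        = ∑ j ∈ range (n+2), F (n+1-j) j := hrefl.symm
      _ = ∑ l ∈ range (n+1), F (n+1-l) l + F (n+1-(n+1)) (n+1) := by
          rw [sum_range_succ]
      _ = ∑ l ∈ range (n+1), F (n+1-l) l + F 0 (n+1) := by
          rw [show n+1-(n+1) = 0 by omega]

lemma gfun_nil (n : ℕ) (t : ℝ) : gfun n [] t = t^n / (Nat.factorial n) := by
  unfold gfun
  rw [Finset.sum_eq_single n]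
  · simp [hsym]
  · intro j hj hjn
    rw [mem_range] at hj
    have : ¬ (n - j = 0) := by omega
    simp [hsym, this]
  · intro h
    exact absurd (self_mem_range_succ n) h

lemma gfun_cons (n : ℕ) (a : ℝ) (L : List ℝ) (t : ℝ) :
    gfun n (a :: L) t = ∫ u in Set.Ioi (0:ℝ), Real.exp (-u) * gfun n L (t + a*u) := by
  have hrep : ∀ u : ℝ, Real.exp (-u) * gfun n L (t + a*u)
      = ∑ j ∈ range (n+1), ∑ i ∈ range (j+1),
          (hsym L (n-j) * a^i * t^(j-i) * (j.choose i) / (Nat.factorial j))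
            * (Real.exp (-u) * u^i) := by
    intro u
    unfold gfun
    rw [Finset.mul_sum]
    refine Finset.sum_congr rfl fun j hj => ?_
    rw [add_comm t (a*u), add_pow, Finset.mul_sum, Finset.sum_div, Finset.mul_sum]
    refine Finset.sum_congr rfl fun i hi => ?_
    ring
  simp only [hrep]
  rw [integral_finset_sum]
  swap
  · intro j hj
    apply integrable_finset_sum
    intro i hi
    exact (integrable_exp_neg_pow i).const_mul _
  have : ∀ j ∈ range (n+1),
      (∫ u in Set.Ioi (0:ℝ), ∑ i ∈ range (j+1),
        (hsym L (n-j) * a^i * t^(j-i) * (j.choose i) / (Nat.factorial j))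
          * (Real.exp (-u) * u^i))
      = ∑ i ∈ range (j+1),
          (hsym L (n-j) * a^i * t^(j-i) * (j.choose i) / (Nat.factorial j))
            * (Nat.factorial i : ℝ) := by
    intro j hj
    rw [integral_finset_sum]
    · refine Finset.sum_congr rfl fun i hi => ?_
      rw [MeasureTheory.integral_const_mul, integral_exp_neg_pow]
    · intro i hi
      exact (integrable_exp_neg_pow i).const_mul _
  rw [sum_congr rfl this]
  -- now pure algebra
  symm
  calc ∑ j ∈ range (n+1), ∑ i ∈ range (j+1),
        (hsym L (n-j) * a^i * t^(j-i) * (j.choose i) / (Nat.factorial j))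
          * (Nat.factorial i : ℝ)
      = ∑ j ∈ range (n+1), ∑ i ∈ range (j+1),
        (hsym L (n-(i+(j-i))) * a^i * t^(j-i) * ((i+(j-i)).choose i) / (Nat.factorial (i+(j-i))))
          * (Nat.factorial i : ℝ) := by
        refine sum_congr rfl fun j hj => sum_congr rfl fun i hi => ?_
        rw [mem_range] at hi
        rw [show i + (j - i) = j by omega]
    _ = ∑ l ∈ range (n+1), ∑ i ∈ range (n+1-l),
        (hsym L (n-(i+l)) * a^i * t^l * ((i+l).choose i) / (Nat.factorial (i+l)))
          * (Nat.factorial i : ℝ) :=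
        triangle_reindex n (fun i l =>
          (hsym L (n-(i+l)) * a^i * t^l * ((i+l).choose i) / (Nat.factorial (i+l)))
            * (Nat.factorial i : ℝ))
    _ = gfun n (a :: L) t := by
        unfold gfun
        refine Finset.sum_congr rfl fun l hl => ?_
        rw [mem_range] at hl
        show _ = hsym (a :: L) (n - l) * t ^ l / (Nat.factorial l)
        rw [hsym_cons, show (n-l)+1 = n+1-l by omega, Finset.sum_mul, Finset.sum_div]
        refine Finset.sum_congr rfl fun i hi => ?_
        rw [mem_range] at hi
        have h1 : n - (i + l) = n - l - i := by omega
        have h2 : (Nat.factorial (i+l) : ℝ) = ((i+l).choose i : ℝ) * (Nat.factorial i) * (Nat.factorial l) := by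
          have h := Nat.choose_mul_factorial_mul_factorial (Nat.le_add_right i l)
          rw [Nat.add_sub_cancel_left] at h
          exact_mod_cast h.symm
        rw [h1, h2]
        have hc : (0:ℝ) < ((i+l).choose i : ℝ) := by
          exact_mod_cast Nat.choose_pos (Nat.le_add_right i l)
        have hfi : (0:ℝ) < (Nat.factorial i : ℝ) := by exact_mod_cast Nat.factorial_pos i
        have hfl : (0:ℝ) < (Nat.factorial l : ℝ) := by exact_mod_cast Nat.factorial_pos l
        field_simp

lemma gfun_nonneg (n : ℕ) (hn : Even n) (L : List ℝ) : ∀ t : ℝ, 0 ≤ gfun n L t := by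
  induction L with
  | nil =>
    intro t
    rw [gfun_nil]
    have : (0:ℝ) ≤ t ^ n := hn.pow_nonneg t
    positivity
  | cons a L ih =>
    intro t
    rw [gfun_cons]
    refine setIntegral_nonneg measurableSet_Ioi fun u hu => ?_
    exact mul_nonneg (Real.exp_pos _).le (ih _)

lemma hsym_nonneg (n : ℕ) (hn : Even n) (L : List ℝ) : 0 ≤ hsym L n := by
  have h := gfun_nonneg n hn L 0
  rw [gfun] at h
  rw [Finset.sum_eq_single 0] at h
  · simpa using h
  · intro j hj hj0
    simp [zero_pow hj0]
  · intro h0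
    simp at h0

open Polynomial in
noncomputable def plist (L : List ℝ) : Polynomial ℝ :=
  (L.map (fun a => Polynomial.X - Polynomial.C a)).prod

open Polynomial in
noncomputable def Qp (n : ℕ) (L : List ℝ) : Polynomial ℝ :=
  ∑ j ∈ range (n - L.length + 1), Polynomial.C (hsym L (n - L.length - j)) * Polynomial.X ^ j

lemma plist_nil : plist [] = 1 := rfl

lemma plist_cons (a : ℝ) (L : List ℝ) :
    plist (a :: L) = (Polynomial.X - Polynomial.C a) * plist L := by
  simp [plist]

lemma plist_append (L M : List ℝ) : plist (L ++ M) = plist L * plist M := by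
  simp [plist]

lemma plist_natDegree_le (L : List ℝ) : (plist L).natDegree ≤ L.length := by
  induction L with
  | nil => simp [plist_nil]
  | cons a L ih =>
    rw [plist_cons]
    refine le_trans (Polynomial.natDegree_mul_le) ?_
    have : (Polynomial.X - Polynomial.C a).natDegree = 1 := Polynomial.natDegree_X_sub_C a
    simp only [List.length_cons, this]
    omega

lemma plist_eval (L : List ℝ) (t : ℝ) :
    (plist L).eval t = (L.map (fun a => t - a)).prod := by
  induction L with
  | nil => simp [plist_nil]
  | cons a L ih => simp [plist_cons, ih]

open Polynomial in
lemma oneStep (e : ℕ) (c : ℕ → ℝ) (a : ℝ) :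
    (∑ j ∈ range (e+1), C (c j) * X^j)
    = (X - C a) * (∑ j ∈ range e, C (∑ i ∈ range (e - j), a^i * c (j+1+i)) * X^j)
    + C (∑ i ∈ range (e+1), a^i * c i) := by
  induction e generalizing c with
  | zero => simp
  | succ e ih =>
    have split : (∑ j ∈ range (e+2), C (c j) * X^j)
        = X * (∑ j ∈ range (e+1), C (c (j+1)) * X^j) + C (c 0) := by
      rw [Finset.sum_range_succ' (fun j => C (c j) * X^j) (e+1), Finset.mul_sum]
      congr 1
      · exact Finset.sum_congr rfl fun j hj => by rw [pow_succ]; ring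
      · simp
    rw [split, ih (fun j => c (j+1))]
    have hq : (∑ j ∈ range (e+1), C (∑ i ∈ range (e+1-j), a^i * c (j+1+i)) * X^j)
        = X * (∑ j ∈ range e, C (∑ i ∈ range (e - j), a^i * c (j+1+i+1)) * X^j)
          + C (∑ i ∈ range (e+1), a^i * c (i+1)) := by
      rw [Finset.sum_range_succ' (fun j => C (∑ i ∈ range (e+1-j), a^i * c (j+1+i)) * X^j) e,
        Finset.mul_sum]
      congr 1
      · refine Finset.sum_congr rfl fun j hj => ?_
        rw [mem_range] at hj
        rw [show e+1-(j+1) = e - j by omega, pow_succ]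
        have : ∀ i ∈ range (e - j), a^i * c (j+1+1+i) = a^i * c (j+1+i+1) := by
          intro i hi; rw [show j+1+1+i = j+1+i+1 by omega]
        rw [Finset.sum_congr rfl this]
        ring
      · have : ∀ i ∈ range (e+1-0), a^i * c (0+1+i) = a^i * c (i+1) := by
          intro i hi; rw [show 0+1+i = i+1 by omega]
        rw [Finset.sum_congr (by norm_num) this]
        simp
    rw [hq]
    have hr : (∑ i ∈ range (e+2), a^i * c i)
        = a * (∑ i ∈ range (e+1), a^i * c (i+1)) + c 0 := by
      rw [Finset.sum_range_succ' (fun i => a^i * c i) (e+1), Finset.mul_sum]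
      congr 1
      · exact Finset.sum_congr rfl fun i hi => by rw [pow_succ]; ring
      · simp
    rw [hr]
    push_cast [Polynomial.C_add, Polynomial.C_mul]
    ring

open Polynomial in
lemma Qp_nil (n : ℕ) : Qp n [] = X^n := by
  unfold Qp
  simp only [List.length_nil, Nat.sub_zero]
  rw [Finset.sum_eq_single n]
  · simp [hsym_nil]
  · intro j hj hjn
    rw [mem_range] at hj
    rw [hsym_nil, if_neg (by omega)]
    simp
  · intro h; exact absurd (self_mem_range_succ n) h

open Polynomial in
lemma Qp_eval (n : ℕ) (L : List ℝ) (t : ℝ) :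
    (Qp n L).eval t = hsym (t :: L) (n - L.length) := by
  unfold Qp
  rw [hsym_cons, Polynomial.eval_finset_sum]
  refine Finset.sum_congr rfl fun j hj => ?_
  rw [Polynomial.eval_mul, Polynomial.eval_C, Polynomial.eval_pow, Polynomial.eval_X, mul_comm]

open Polynomial in
lemma keydecomp (L : List ℝ) (n : ℕ) (hn : L.length ≤ n) :
    ∃ R : Polynomial ℝ, (R = 0 ∨ R.natDegree + 1 ≤ L.length) ∧
      (X^n : Polynomial ℝ) = plist L * Qp n L + R := by
  induction L generalizing n with
  | nil =>
    exact ⟨0, Or.inl rfl, by rw [plist_nil, Qp_nil, one_mul, add_zero]⟩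
  | cons a L ih =>
    have hlen : L.length ≤ n := by
      simp only [List.length_cons] at hn; omega
    obtain ⟨R, hR, hid⟩ := ih n hlen
    set e := n - L.length with he
    have he1 : 1 ≤ e := by simp only [List.length_cons] at hn; omega
    have h2 : Qp n (a :: L) = ∑ j ∈ range e,
        C (∑ i ∈ range (e - j), a^i * hsym L (e-(j+1+i))) * X^j := by
      unfold Qp
      simp only [List.length_cons]
      rw [show n - (L.length + 1) = e - 1 from by omega, show (e-1)+1 = e from by omega]
      refine Finset.sum_congr rfl fun j hj => ?_
      rw [mem_range] at hj
      have h3 : hsym (a :: L) (e-1-j) = ∑ i ∈ range (e - j), a^i * hsym L (e-(j+1+i)) := by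
        rw [hsym_cons, show e-1-j+1 = e - j from by omega]
        refine Finset.sum_congr rfl fun i hi => ?_
        rw [mem_range] at hi
        rw [show e-1-j-i = e-(j+1+i) from by omega]
      rw [h3]
    have hQ : Qp n L = (X - C a) * Qp n (a :: L)
        + C (∑ i ∈ range (e+1), a^i * hsym L (e-i)) := by
      rw [h2]
      unfold Qp
      rw [← he]
      exact oneStep e (fun j => hsym L (e - j)) a
    refine ⟨C (∑ i ∈ range (e+1), a^i * hsym L (e-i)) * plist L + R, Or.inr ?_, ?_⟩
    · have h2 : (C (∑ i ∈ range (e+1), a^i * hsym L (e-i)) * plist L).natDegree ≤ L.length := by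
        refine le_trans Polynomial.natDegree_mul_le ?_
        rw [Polynomial.natDegree_C]
        simpa using plist_natDegree_le L
      have h3 : R.natDegree ≤ L.length := by
        rcases hR with h | h
        · simp [h]
        · omega
      have := Polynomial.natDegree_add_le (C (∑ i ∈ range (e+1), a^i * hsym L (e-i)) * plist L) R
      simp only [List.length_cons]
      omega
    · rw [hid, hQ, plist_cons]
      ring

lemma abs_pow_le (α : ℝ) (hα : 0 < α) (j : ℕ) (t : ℝ) :
    |t|^j ≤ (1 + Nat.factorial j / α^j) * Real.exp (α * t^2) := by
  have h1 : (1:ℝ) ≤ Real.exp (α * t^2) := by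
    rw [← Real.exp_zero]
    exact Real.exp_le_exp.mpr (by positivity)
  have h2 : (t^2)^j ≤ (Nat.factorial j / α^j) * Real.exp (α * t^2) := by
    have h3 : (α * t^2)^j / (Nat.factorial j) ≤ Real.exp (α * t^2) := by
      calc (α * t^2)^j / (Nat.factorial j)
          ≤ ∑ i ∈ range (j+1), (α * t^2)^i / (Nat.factorial i) := by
            refine Finset.single_le_sum (f := fun i => (α * t^2)^i / (Nat.factorial i))
              (fun i hi => by positivity) (self_mem_range_succ j)
        _ ≤ Real.exp (α * t^2) := Real.sum_le_exp_of_nonneg (by positivity) (j+1)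
    have hαj : (0:ℝ) < α^j := by positivity
    rw [mul_pow] at h3
    have hfj : (0:ℝ) < (Nat.factorial j : ℝ) := by exact_mod_cast Nat.factorial_pos j
    rw [div_le_iff₀ hfj] at h3
    rw [div_mul_eq_mul_div, le_div_iff₀ hαj]
    calc (t^2)^j * α^j = α^j * (t^2)^j := by ring
      _ ≤ Real.exp (α*t^2) * (Nat.factorial j) := h3
      _ = (Nat.factorial j) * Real.exp (α*t^2) := by ring
  have habs : |t|^j ≤ 1 + (t^2)^j := by
    rcases le_or_gt (|t|) 1 with h | h
    · have : |t|^j ≤ 1 := pow_le_one₀ (abs_nonneg t) h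
      have h0 : (0:ℝ) ≤ (t^2)^j := by positivity
      linarith
    · have : |t|^j ≤ (t^2)^j := by
        refine pow_le_pow_left₀ (abs_nonneg t) ?_ j
        nlinarith [abs_nonneg t, sq_abs t]
      linarith
  calc |t|^j ≤ 1 + (t^2)^j := habs
    _ ≤ 1 * Real.exp (α*t^2) + (Nat.factorial j / α^j) * Real.exp (α * t^2) := by
        rw [one_mul]; exact add_le_add h1 h2
    _ = (1 + Nat.factorial j / α^j) * Real.exp (α * t^2) := by ring

lemma poly_integrable {μ : Measure ℝ} [IsProbabilityMeasure μ] {α : ℝ} (hα : 0 < α)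
    (hint : Integrable (fun t : ℝ => Real.exp (α * t ^ 2)) μ) (p : Polynomial ℝ) :
    Integrable (fun t => p.eval t) μ := by
  set C := ∑ j ∈ range (p.natDegree + 1), |p.coeff j| * (1 + Nat.factorial j / α^j) with hC
  refine ((hint.const_mul C).mono' (p.continuous_aeval.aestronglyMeasurable) ?_)
  refine Filter.Eventually.of_forall fun t => ?_
  rw [Real.norm_eq_abs]
  calc |p.eval t| = |∑ j ∈ range (p.natDegree + 1), p.coeff j * t^j| := by
        rw [Polynomial.eval_eq_sum_range]
    _ ≤ ∑ j ∈ range (p.natDegree + 1), |p.coeff j * t^j| := Finset.abs_sum_le_sum_abs _ _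
    _ ≤ ∑ j ∈ range (p.natDegree + 1), |p.coeff j| * ((1 + Nat.factorial j / α^j) * Real.exp (α * t^2)) := by
        refine Finset.sum_le_sum fun j hj => ?_
        rw [abs_mul, abs_pow]
        exact mul_le_mul_of_nonneg_left (abs_pow_le α hα j t) (abs_nonneg _)
    _ = C * Real.exp (α * t^2) := by rw [hC, Finset.sum_mul]; exact Finset.sum_congr rfl fun j hj => by ring

lemma moment_le {μ : Measure ℝ} [IsProbabilityMeasure μ] {m : ℕ} (hm : 1 ≤ m)
    {w x : Fin m → ℝ}
    (hexact : ∀ p : Polynomial ℝ, p.natDegree ≤ 2 * m - 1 →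
      ∑ i, w i * p.eval (x i) = ∫ t, p.eval t ∂μ)
    {α : ℝ} (hα : 0 < α)
    (hint : Integrable (fun t : ℝ => Real.exp (α * t ^ 2)) μ) (k : ℕ) :
    ∑ i, w i * (x i)^(2*k) ≤ ∫ t, t^(2*k) ∂μ := by
  rcases lt_or_ge k m with hk | hk
  · refine le_of_eq ?_
    have h := hexact (Polynomial.X^(2*k)) (by rw [Polynomial.natDegree_X_pow]; omega)
    simpa using h
  · set l := List.ofFn x with hldef
    have hll : l.length = m := List.length_ofFn (f := x)
    set L := l ++ l with hLdef
    have hL : L.length = 2*m := by rw [hLdef, List.length_append, hll]; ring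
    obtain ⟨R, hR, hid⟩ := keydecomp L (2*k) (by rw [hL]; omega)
    have hRdeg : R.natDegree ≤ 2*m - 1 := by
      rcases hR with h | h
      · rw [h]; simp
      · rw [hL] at h; omega
    have hplisteval : ∀ t : ℝ, (plist L).eval t = ((l.map (fun a => t - a)).prod)^2 := by
      intro t
      rw [hLdef, plist_append, Polynomial.eval_mul, plist_eval]
      ring
    have hnode : ∀ i, (plist L).eval (x i) = 0 := by
      intro i
      rw [hplisteval]
      have h0 : (0:ℝ) ∈ l.map (fun a => x i - a) := by
        refine List.mem_map.mpr ⟨x i, ?_, by ring⟩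
        rw [hldef]
        exact List.mem_ofFn.mpr ⟨i, rfl⟩
      rw [List.prod_eq_zero h0]
      norm_num
    have hevalR : ∀ i, R.eval (x i) = (x i)^(2*k) := by
      intro i
      have h := congrArg (Polynomial.eval (x i)) hid
      rw [Polynomial.eval_pow, Polynomial.eval_X, Polynomial.eval_add, Polynomial.eval_mul,
        hnode i, zero_mul, zero_add] at h
      exact h.symm
    have hle : ∀ t : ℝ, R.eval t ≤ t^(2*k) := by
      intro t
      have h := congrArg (Polynomial.eval t) hid
      rw [Polynomial.eval_pow, Polynomial.eval_X, Polynomial.eval_add, Polynomial.eval_mul] at h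
      have hq : 0 ≤ (Qp (2*k) L).eval t := by
        rw [Qp_eval, hL]
        exact hsym_nonneg _ ⟨k - m, by omega⟩ _
      have hsq : 0 ≤ (plist L).eval t := by rw [hplisteval]; positivity
      nlinarith [mul_nonneg hsq hq]
    have hsum : ∑ i, w i * (x i)^(2*k) = ∫ t, R.eval t ∂μ := by
      rw [← hexact R hRdeg]
      exact Finset.sum_congr rfl fun i _ => by rw [hevalR i]
    rw [hsum]
    have hint1 : Integrable (fun t => R.eval t) μ := poly_integrable hα hint R
    have hint2 : Integrable (fun t : ℝ => t^(2*k)) μ := by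
      have h := poly_integrable hα hint (Polynomial.X^(2*k))
      simpa using h
    exact integral_mono hint1 hint2 hle

/-- Gauss quadrature applied to `exp (α x²)` is a lower bound for the integral. -/
theorem gauss_quadrature_exp_sq_le
    (μ : Measure ℝ) [IsProbabilityMeasure μ] (m : ℕ)
    (w : Fin m → ℝ) (x : Fin m → ℝ)
    (hw : ∀ i, 0 < w i)
    (hexact : ∀ p : Polynomial ℝ, p.natDegree ≤ 2 * m - 1 →
      ∑ i, w i * p.eval (x i) = ∫ t, p.eval t ∂μ)
    (α : ℝ) (hα : 0 < α)
    (hint : Integrable (fun t : ℝ => Real.exp (α * t ^ 2)) μ) :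
    ∑ i, w i * Real.exp (α * (x i) ^ 2) ≤ ∫ t, Real.exp (α * t ^ 2) ∂μ := by
  rcases Nat.eq_zero_or_pos m with hm | hm
  · subst hm
    simp only [Finset.univ_eq_empty, Finset.sum_empty]
    exact integral_nonneg fun t => (Real.exp_pos _).le
  · have hexp : ∀ z : ℝ, Real.exp z = ∑' k : ℕ, z^k / (Nat.factorial k) := by
      intro z
      rw [Real.exp_eq_exp_ℝ, NormedSpace.exp_eq_tsum_div]
    have hsummable : ∀ i : Fin m,
        Summable (fun k : ℕ => w i * ((α * (x i)^2)^k / (Nat.factorial k))) :=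
      fun i => (Real.summable_pow_div_factorial _).mul_left _
    have hLHS : ∑ i, w i * Real.exp (α * (x i)^2)
        = ∑' k : ℕ, ∑ i, w i * ((α * (x i)^2)^k / (Nat.factorial k)) := by
      rw [Summable.tsum_finsetSum (fun i _ => hsummable i)]
      refine Finset.sum_congr rfl fun i _ => ?_
      rw [hexp, ← tsum_mul_left]
    rw [hLHS]
    refine Real.tsum_le_of_sum_range_le (fun k => ?_) (fun K => ?_)
    · exact Finset.sum_nonneg fun i _ => mul_nonneg (hw i).le (by positivity)
    · have step1 : ∀ k : ℕ, ∑ i, w i * ((α * (x i)^2)^k / (Nat.factorial k))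
          = (α^k / (Nat.factorial k)) * ∑ i, w i * (x i)^(2*k) := by
        intro k
        rw [Finset.mul_sum]
        refine Finset.sum_congr rfl fun i _ => ?_
        rw [mul_pow, pow_mul]
        ring
      have hintk : ∀ k : ℕ, Integrable (fun t : ℝ => t^(2*k)) μ := by
        intro k
        have h := poly_integrable hα hint (Polynomial.X^(2*k))
        simpa using h
      calc ∑ k ∈ range K, ∑ i, w i * ((α * (x i)^2)^k / (Nat.factorial k))
          = ∑ k ∈ range K, (α^k / (Nat.factorial k)) * ∑ i, w i * (x i)^(2*k) :=
            Finset.sum_congr rfl fun k _ => step1 k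
        _ ≤ ∑ k ∈ range K, (α^k / (Nat.factorial k)) * ∫ t, t^(2*k) ∂μ := by
            refine Finset.sum_le_sum fun k _ => ?_
            exact mul_le_mul_of_nonneg_left (moment_le hm hexact hα hint k) (by positivity)
        _ = ∑ k ∈ range K, ∫ t, (α^k / (Nat.factorial k)) * t^(2*k) ∂μ := by
            refine Finset.sum_congr rfl fun k _ => ?_
            rw [MeasureTheory.integral_const_mul]
        _ = ∫ t, ∑ k ∈ range K, (α^k / (Nat.factorial k)) * t^(2*k) ∂μ := by
            refine (integral_finset_sum _ fun k _ => ?_).symm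
            exact (hintk k).const_mul _
        _ ≤ ∫ t, Real.exp (α * t^2) ∂μ := by
            refine integral_mono (integrable_finset_sum _ fun k _ => (hintk k).const_mul _)
              hint fun t => ?_
            calc ∑ k ∈ range K, (α^k / (Nat.factorial k)) * t^(2*k)
                = ∑ k ∈ range K, (α * t^2)^k / (Nat.factorial k) := by
                  refine Finset.sum_congr rfl fun k _ => ?_
                  rw [mul_pow, pow_mul]
                  ring
              _ ≤ Real.exp (α * t^2) := Real.sum_le_exp_of_nonneg (by positivity) K
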